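/- Consider the conceptual prox method: z_0 ∈ Z arbitrary, and for each t ≥ 1, z_t ∈ Z satisfies z_t = Prox_{z_{t−1}}(η F(z_t)). Then for every T ∈ ℕ and every ẑ ∈ Z, the cumulative linear regret satisfies ∑_{t=1}^T ⟨F(z_t), z_t − ẑ⟩ ≤ (1/η)(D(ẑ‖z_0) − D(ẑ‖z_T)) − (1/η)∑_{t=1}^T D(z_t‖z_{t−1}) ≤ (1/η) D(ẑ‖z_0). In particular, the regret is bounded by a constant independent of T. -/

import Mathlib

open scoped RealInnerProductSpace

/-- Constant regret of the (exact) conceptual prox method: if for all `t ≥ 1` the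
iterate `z_t` satisfies `z_t = Prox_{z_{t−1}}(η F(z_t))`, then for every `T` and
every comparator `ẑ ∈ Z`,
`∑_{t=1}^T ⟪F(z_t), z_t − ẑ⟫ ≤ (1/η)(D(ẑ‖z_0) − D(ẑ‖z_T)) − (1/η)∑_t D(z_t‖z_{t−1})
  ≤ (1/η) D(ẑ‖z_0)`. -/
theorem stmt_5 {d : ℕ} (Z : Set (EuclideanSpace ℝ (Fin d)))
    (hZne : Z.Nonempty) (hZconv : Convex ℝ Z) (hZcomp : IsCompact Z)
    (N : Seminorm ℝ (EuclideanSpace ℝ (Fin d)))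
    (hNdef : ∀ v, N v = 0 → v = 0)
    (φ : EuclideanSpace ℝ (Fin d) → ℝ)
    (gradφ : EuclideanSpace ℝ (Fin d) → EuclideanSpace ℝ (Fin d))
    (hgrad : ∀ x ∈ Z, HasGradientAt φ (gradφ x) x)
    (hsc : ∀ x ∈ Z, ∀ y ∈ Z,
      φ x + ⟪gradφ x, y - x⟫ + (1/2) * (N (y - x))^2 ≤ φ y)
    (D : EuclideanSpace ℝ (Fin d) → EuclideanSpace ℝ (Fin d) → ℝ)
    (hD : ∀ x x', D x x' = φ x - φ x' - ⟪gradφ x', x - x'⟫)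
    (hDnonneg : ∀ x ∈ Z, ∀ x' ∈ Z, 0 ≤ D x x')
    (F : EuclideanSpace ℝ (Fin d) → EuclideanSpace ℝ (Fin d))
    (η : ℝ) (hη : 0 < η)
    (z : ℕ → EuclideanSpace ℝ (Fin d)) (hz0 : z 0 ∈ Z)
    (hmem : ∀ t : ℕ, 1 ≤ t → z t ∈ Z)
    -- fixed-point equation `z_t = Prox_{z_{t−1}}(η F(z_t))` for all `t ≥ 1`:
    (hfp : ∀ t : ℕ, 1 ≤ t → ∀ w ∈ Z,
      ⟪η • F (z t), z t⟫ + D (z t) (z (t - 1)) ≤ ⟪η • F (z t), w⟫ + D w (z (t - 1))) :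
    ∀ T : ℕ, ∀ zhat ∈ Z,
      (∑ t ∈ Finset.Icc 1 T, ⟪F (z t), z t - zhat⟫)
          ≤ (1/η) * (D zhat (z 0) - D zhat (z T))
            - (1/η) * ∑ t ∈ Finset.Icc 1 T, D (z t) (z (t - 1)) ∧
      (1/η) * (D zhat (z 0) - D zhat (z T))
          - (1/η) * ∑ t ∈ Finset.Icc 1 T, D (z t) (z (t - 1))
        ≤ (1/η) * D zhat (z 0) := by
  have hmem' : ∀ t : ℕ, z t ∈ Z := by
    intro t; cases t with
    | zero => exact hz0
    | succ n => exact hmem _ (Nat.succ_le_succ (Nat.zero_le n))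
  -- variational inequality
  have hVI : ∀ t : ℕ, 1 ≤ t → ∀ w ∈ Z,
      0 ≤ ⟪η • F (z t) + gradφ (z t) - gradφ (z (t-1)), w - z t⟫ := by
    intro t ht w hw
    set a := η • F (z t)
    set b := gradφ (z (t-1))
    set g : EuclideanSpace ℝ (Fin d) → ℝ := fun u => ⟪a, u⟫ + D u (z (t-1)) with hg
    have hmin0 : IsMinOn g Z (z t) := isMinOn_iff.mpr (fun u hu => hfp t ht u hu)
    have hmin : IsLocalMinOn g Z (z t) := hmin0.localize
    have hderiv : HasFDerivWithinAt g
        (innerSL ℝ a + (InnerProductSpace.toDual ℝ _) (gradφ (z t)) - innerSL ℝ b) Z (z t) := by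
      have h1 : HasFDerivAt (fun u => ⟪a, u⟫) (innerSL ℝ a) (z t) := (innerSL ℝ a).hasFDerivAt
      have h2 : HasFDerivAt φ ((InnerProductSpace.toDual ℝ _) (gradφ (z t))) (z t) :=
        (hgrad _ (hmem' t)).hasFDerivAt
      have h3 : HasFDerivAt (fun u => ⟪b, u - z (t-1)⟫) (innerSL ℝ b) (z t) := by
        have : HasFDerivAt (fun u : EuclideanSpace ℝ (Fin d) => ⟪b, u⟫ - ⟪b, z (t-1)⟫)
            (innerSL ℝ b) (z t) := ((innerSL ℝ b).hasFDerivAt).sub_const _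
        simpa [inner_sub_right] using this
      have : HasFDerivAt (fun u => ⟪a, u⟫ + (φ u - φ (z (t-1)) - ⟪b, u - z (t-1)⟫))
          (innerSL ℝ a + (InnerProductSpace.toDual ℝ _) (gradφ (z t)) - innerSL ℝ b) (z t) := by
        have := (h1.add ((h2.sub_const (φ (z (t-1)))).sub h3))
        rw [add_sub_assoc]
        exact this
      have heq : g = fun u => ⟪a, u⟫ + (φ u - φ (z (t-1)) - ⟪b, u - z (t-1)⟫) := by
        funext u; simp [hg, hD, b]
      rw [heq]
      exact this.hasFDerivWithinAt
    have hcone : w - z t ∈ posTangentConeAt Z (z t) :=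
      sub_mem_posTangentConeAt_of_segment_subset (hZconv.segment_subset (hmem' t) hw)
    have := hmin.hasFDerivWithinAt_nonneg hderiv hcone
    simpa [inner_add_left, inner_sub_left, InnerProductSpace.toDual_apply_apply] using this
  intro T zhat hzhat
  -- per-step inequality
  have hstep : ∀ t : ℕ, 1 ≤ t →
      η * ⟪F (z t), z t - zhat⟫ ≤ D zhat (z (t-1)) - D zhat (z t) - D (z t) (z (t-1)) := by
    intro t ht
    have h := hVI t ht zhat hzhat
    rw [hD zhat (z (t-1)), hD zhat (z t), hD (z t) (z (t-1))]
    have expand : ⟪η • F (z t) + gradφ (z t) - gradφ (z (t-1)), zhat - z t⟫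
        = η * ⟪F (z t), zhat - z t⟫ + ⟪gradφ (z t), zhat - z t⟫
          - ⟪gradφ (z (t-1)), zhat - z t⟫ := by
      rw [inner_sub_left, inner_add_left, real_inner_smul_left]
    rw [expand] at h
    have h2 : ⟪F (z t), z t - zhat⟫ = - ⟪F (z t), zhat - z t⟫ := by
      rw [← inner_neg_right]; congr 1; abel
    have h3 : ⟪gradφ (z (t-1)), zhat - z (t-1)⟫ - ⟪gradφ (z (t-1)), z t - z (t-1)⟫
        = ⟪gradφ (z (t-1)), zhat - z t⟫ := by
      rw [← inner_sub_right]; congr 1; abel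
    nlinarith [h3]
  -- sum and telescope
  have hsum : η * ∑ t ∈ Finset.Icc 1 T, ⟪F (z t), z t - zhat⟫
      ≤ (D zhat (z 0) - D zhat (z T)) - ∑ t ∈ Finset.Icc 1 T, D (z t) (z (t-1)) := by
    rw [Finset.mul_sum]
    have h1 : ∑ t ∈ Finset.Icc 1 T, η * ⟪F (z t), z t - zhat⟫
        ≤ ∑ t ∈ Finset.Icc 1 T, (D zhat (z (t-1)) - D zhat (z t) - D (z t) (z (t-1))) := by
      apply Finset.sum_le_sum
      intro t ht
      exact hstep t (Finset.mem_Icc.mp ht).1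
    refine h1.trans_eq ?_
    rw [Finset.sum_sub_distrib]
    congr 1
    have tel : ∀ n : ℕ, ∑ t ∈ Finset.Icc 1 n, (D zhat (z (t-1)) - D zhat (z t))
        = D zhat (z 0) - D zhat (z n) := by
      intro n
      induction n with
      | zero => simp
      | succ m ih =>
        rw [Finset.sum_Icc_succ_top (Nat.le_add_left 1 m), ih]
        simp only [Nat.add_sub_cancel]
        ring
    exact tel T
  have hT : 0 ≤ D zhat (z T) := hDnonneg _ hzhat _ (hmem' T)
  have hS : 0 ≤ ∑ t ∈ Finset.Icc 1 T, D (z t) (z (t-1)) := by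
    apply Finset.sum_nonneg
    intro t ht
    exact hDnonneg _ (hmem' t) _ (hmem' (t-1))
  constructor
  · rw [div_mul_eq_mul_div, div_mul_eq_mul_div, ← sub_div, le_div_iff₀ hη, one_mul, one_mul]
    linarith [hsum]
  · have : (1/η) * D zhat (z T) ≥ 0 := by positivity
    have h2 : (1/η) * ∑ t ∈ Finset.Icc 1 T, D (z t) (z (t-1)) ≥ 0 := by positivity
    nlinarith
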